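/- arXiv:2210.05807 — 2 statements merged into one kernel-verified Lean document; each statement's English description precedes it below -/
import Mathlib

section
/- Let W > 0, M > 0, Δ > 0 with W·M ≥ 1 (W M being the first summand). Let S = min{n ∈ ℕ₊ : Σ_{s=1}^n (W M + (s−1)) ≥ W M² Δ·w} for some w > 0 with the minimum attained, and let Γ ≥ 0 satisfy Σ_{s=1}^S (Γ W M + (s−1)) = Γ² w M² Δ. Then S/Γ ≥ S − 2. -/
open Finset

lemma sum_aux (c : ℝ) (n : ℕ) :
    (∑ s ∈ Finset.Icc 1 n, (c + ((s : ℝ) - 1))) = n * c + n * (n - 1) / 2 := by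
  induction n with
  | zero => simp
  | succ n ih =>
      rw [Finset.sum_Icc_succ_top (by omega), ih]
      push_cast
      ring

/-- Algebraic fact on S_t and Γ_t in the strongly convex ACGD-S analysis:
if S = min{n ∈ ℕ₊ : Σ_{s=1}^n (W M + (s−1)) ≥ w M² Δ} and Γ ≥ 0 satisfies
Σ_{s=1}^S (Γ W M + (s−1)) = Γ² w M² Δ, then S/Γ ≥ S − 2. -/
theorem S_div_Gamma_ge
    (W M Δ w : ℝ) (hW : 0 < W) (hM : 0 < M) (hΔ : 0 < Δ) (hw : 0 < w)
    (hWM : 1 ≤ W * M)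
    (S : ℕ) (hS1 : 1 ≤ S)
    (hSge : (∑ s ∈ Finset.Icc 1 S, (W * M + ((s : ℝ) - 1))) ≥ w * M ^ 2 * Δ)
    (hSmin : ∀ n : ℕ, 1 ≤ n →
      (∑ s ∈ Finset.Icc 1 n, (W * M + ((s : ℝ) - 1))) ≥ w * M ^ 2 * Δ → S ≤ n)
    (Γ : ℝ) (hΓ : 0 ≤ Γ)
    (hΓeq : (∑ s ∈ Finset.Icc 1 S, (Γ * (W * M) + ((s : ℝ) - 1))) = Γ ^ 2 * (w * M ^ 2 * Δ)) :
    (S : ℝ) / Γ ≥ (S : ℝ) - 2 := by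
  set A : ℝ := W * M with hA
  set B : ℝ := w * M ^ 2 * Δ with hB
  have hBpos : 0 < B := by positivity
  rw [sum_aux] at hΓeq
  by_cases hS2 : S ≤ 2
  · have : (S : ℝ) - 2 ≤ 0 := by
      have : (S : ℝ) ≤ 2 := by exact_mod_cast hS2
      linarith
    have h0 : 0 ≤ (S : ℝ) / Γ := div_nonneg (Nat.cast_nonneg S) hΓ
    linarith
  · push_neg at hS2
    have hS3 : 3 ≤ S := hS2
    have hS3R : (3 : ℝ) ≤ (S : ℝ) := by exact_mod_cast hS3
    have hΓpos : 0 < Γ := by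
      rcases hΓ.lt_or_eq with h | h
      · exact h
      · exfalso
        rw [← h] at hΓeq
        nlinarith
    -- minimality: sum up to S-1 is < B
    have hlt : ((S : ℝ) - 1) * A + ((S : ℝ) - 1) * ((S : ℝ) - 2) / 2 < B := by
      by_contra hc
      push_neg at hc
      have h1 : 1 ≤ S - 1 := by omega
      have := hSmin (S - 1) h1 (by
        rw [sum_aux]
        have hcast : ((S - 1 : ℕ) : ℝ) = (S : ℝ) - 1 := by
          push_cast [Nat.cast_sub hS1]; ring
        rw [hcast]
        linarith)
      omega
    -- show (S-2) * Γ ≤ S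
    have hkey : ((S : ℝ) - 2) * Γ ≤ (S : ℝ) := by
      by_contra hc
      push_neg at hc
      have hΓ1 : 1 < Γ := by nlinarith
      nlinarith [mul_pos hΓpos hΓpos, sq_nonneg (Γ - 1), mul_lt_mul_of_pos_left hlt (mul_pos hΓpos hΓpos)]
    rw [ge_iff_le, ← sub_nonneg, div_sub' (ne_of_gt hΓpos)]
    apply div_nonneg _ hΓ
    nlinarith
end

section
/- Let N ≥ 1, nonnegative integers S_1,…,S_N, positive reals W_1,…,W_N, M̄ > 0 and bounds M_t ≤ M̄, and suppose Σ_{i=1}^{t−1}[S_i − 3]_+ ≤ M̄ W_t for all t, and Σ_{s=1}^{S_t − 1}(M̄ W_t + (s−1)) ≤ M̄² w_t Δ for all t, where w_t > 0 and Δ > 0. Define R = Σ_{t=1}^N [S_t − 3]_+. Then R²/2 ≤ M̄² Δ Σ_{t=1}^N w_t. -/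
open Finset

lemma myGaussSum (n : ℕ) : (∑ s ∈ Icc 1 n, s) * 2 = n * (n + 1) := by
  induction n with
  | zero => simp
  | succ n ih =>
      rw [Finset.sum_Icc_succ_top (by omega : 1 ≤ n + 1), add_mul, ih]
      ring

lemma gaussA (P r : ℕ) :
    ∑ s ∈ Icc 1 (P + r), s = (∑ s ∈ Icc 1 P, s) + ∑ s ∈ Icc 1 r, (P + s) := by
  induction r with
  | zero => simp
  | succ n ih =>
      rw [show P + (n + 1) = (P + n) + 1 from rfl,
        Finset.sum_Icc_succ_top (by omega : 1 ≤ P + n + 1),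
        Finset.sum_Icc_succ_top (by omega : 1 ≤ n + 1), ih]
      omega

lemma telescope (r : ℕ → ℕ) (n : ℕ) :
    ∑ s ∈ Icc 1 (∑ t ∈ Icc 1 n, r t), s
      = ∑ t ∈ Icc 1 n, ∑ s ∈ Icc 1 (r t), ((∑ i ∈ Icc 1 (t - 1), r i) + s) := by
  induction n with
  | zero => simp
  | succ n ih =>
      rw [Finset.sum_Icc_succ_top (by omega : 1 ≤ n + 1),
        Finset.sum_Icc_succ_top (by omega : 1 ≤ n + 1), gaussA, ih]
      simp

/-- The counting argument bounding the total number of inner iterations in the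
strongly convex ACGD-S analysis: with R = Σ_{t=1}^N [S_t − 3]₊,
one has R²/2 ≤ M̄² Δ Σ_{t=1}^N w_t. -/
theorem inner_iteration_count_bound
    (N : ℕ) (hN : 1 ≤ N)
    (S : ℕ → ℕ) (W w M : ℕ → ℝ) (Mbar Δ : ℝ)
    (hMbar : 0 < Mbar) (hΔ : 0 < Δ)
    (hWpos : ∀ t ∈ Finset.Icc 1 N, 0 < W t)
    (hwpos : ∀ t ∈ Finset.Icc 1 N, 0 < w t)
    (hMle : ∀ t ∈ Finset.Icc 1 N, M t ≤ Mbar)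
    (hMpos : ∀ t ∈ Finset.Icc 1 N, 0 < M t)
    (hprefix : ∀ t ∈ Finset.Icc 1 N,
      (∑ i ∈ Finset.Icc 1 (t - 1), ((S i - 3 : ℕ) : ℝ)) ≤ Mbar * W t)
    (hmin : ∀ t ∈ Finset.Icc 1 N,
      (∑ s ∈ Finset.Icc 1 (S t - 1), (Mbar * W t + ((s : ℝ) - 1))) ≤
        Mbar ^ 2 * w t * Δ)
    (R : ℕ) (hR : R = ∑ t ∈ Finset.Icc 1 N, (S t - 3)) :
    (R : ℝ) ^ 2 / 2 ≤ Mbar ^ 2 * Δ * ∑ t ∈ Finset.Icc 1 N, w t := by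
  set r : ℕ → ℕ := fun t => S t - 3 with hr
  -- Step 1: R^2/2 ≤ ∑_{s=1}^R s  (Gauss)
  have hgauss : (R : ℝ) ^ 2 / 2 ≤ ((∑ s ∈ Icc 1 R, s : ℕ) : ℝ) := by
    have h2 : (∑ s ∈ Icc 1 R, s) * 2 = R * (R + 1) := myGaussSum R
    have h2' : ((∑ s ∈ Icc 1 R, s : ℕ) : ℝ) * 2 = (R : ℝ) * ((R : ℝ) + 1) := by
      exact_mod_cast congrArg (Nat.cast : ℕ → ℝ) h2
    nlinarith [Nat.cast_nonneg (α := ℝ) R]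
  -- Step 2: global reindexing
  have htel : ((∑ s ∈ Icc 1 R, s : ℕ) : ℝ)
      = ∑ t ∈ Icc 1 N, ((∑ s ∈ Icc 1 (r t), ((∑ i ∈ Icc 1 (t - 1), r i) + s) : ℕ) : ℝ) := by
    rw [hR, telescope r N]
    push_cast
    rfl
  -- Step 3: per-term bound
  have hterm : ∀ t ∈ Icc 1 N,
      ((∑ s ∈ Icc 1 (r t), ((∑ i ∈ Icc 1 (t - 1), r i) + s) : ℕ) : ℝ)
        ≤ Mbar ^ 2 * w t * Δ := by
    intro t ht
    have hWt := hWpos t ht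
    have hP := hprefix t ht
    have hMW : 0 ≤ Mbar * W t := le_of_lt (mul_pos hMbar hWt)
    -- cast inner sum
    have hcast : ((∑ s ∈ Icc 1 (r t), ((∑ i ∈ Icc 1 (t - 1), r i) + s) : ℕ) : ℝ)
        = ∑ s ∈ Icc 1 (r t), ((∑ i ∈ Icc 1 (t - 1), ((r i : ℕ) : ℝ)) + (s : ℝ)) := by
      push_cast
      rfl
    rw [hcast]
    -- bound prefix by Mbar * W t
    have step1 : ∑ s ∈ Icc 1 (r t), ((∑ i ∈ Icc 1 (t - 1), ((r i : ℕ) : ℝ)) + (s : ℝ))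
        ≤ ∑ s ∈ Icc 1 (r t), (Mbar * W t + (s : ℝ)) := by
      apply Finset.sum_le_sum
      intro s _
      exact add_le_add_left hP _
    -- reindex s ↦ s+1 and compare with the hmin sum
    have step2 : ∑ s ∈ Icc 1 (r t), (Mbar * W t + (s : ℝ))
        ≤ ∑ s ∈ Icc 1 (S t - 1), (Mbar * W t + ((s : ℝ) - 1)) := by
      have himg : (Icc 1 (r t)).image (· + 1) = Icc 2 (r t + 1) := by
        rw [Finset.image_add_right_Icc]
      have hre : ∑ s ∈ Icc 1 (r t), (Mbar * W t + (s : ℝ))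
          = ∑ s ∈ Icc 2 (r t + 1), (Mbar * W t + ((s : ℝ) - 1)) := by
        rw [← himg, Finset.sum_image (by intro a _ b _ h; simp only at h; omega)]
        apply Finset.sum_congr rfl
        intro s _
        push_cast
        ring
      rw [hre]
      apply Finset.sum_le_sum_of_subset_of_nonneg
      · intro s hs
        simp only [Finset.mem_Icc] at hs ⊢
        have hrt : r t = S t - 3 := rfl
        omega
      · intro s hs _
        simp only [Finset.mem_Icc] at hs
        have : (1 : ℝ) ≤ (s : ℝ) := by exact_mod_cast hs.1
        linarith
    exact le_trans (le_trans step1 step2) (hmin t ht)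
  -- combine
  calc (R : ℝ) ^ 2 / 2 ≤ ((∑ s ∈ Icc 1 R, s : ℕ) : ℝ) := hgauss
    _ = _ := htel
    _ ≤ ∑ t ∈ Icc 1 N, Mbar ^ 2 * w t * Δ := Finset.sum_le_sum hterm
    _ = Mbar ^ 2 * Δ * ∑ t ∈ Icc 1 N, w t := by
        rw [Finset.mul_sum]
        apply Finset.sum_congr rfl
        intro t _
        ring
end
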